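/- For every n ≥ 1, the group with presentation ⟨x, y | x⁻¹yⁿx = yⁿ⁺¹, x = w⟩, where w is any word in x and y with exponent sum 0 in x, is trivial. -/

import Mathlib

private lemma conj_pow_left_aux {G : Type*} [Group G] (g u : G) (m : ℕ) :
    (g * u * g⁻¹) ^ m = g * u ^ m * g⁻¹ := by
  induction m with
  | zero => simp
  | succ k ih =>
    rw [pow_succ, pow_succ, ih]
    group

private lemma conj_zpow_left_aux {G : Type*} [Group G] (g u : G) (m : ℤ) :
    (g * u * g⁻¹) ^ m = g * u ^ m * g⁻¹ := by
  cases m with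
  | ofNat k =>
    simp only [Int.ofNat_eq_coe, zpow_natCast]
    exact conj_pow_left_aux g u k
  | negSucc k =>
    rw [zpow_negSucc, zpow_negSucc, conj_pow_left_aux]
    group

private lemma conj_zpow_right_aux {G : Type*} [Group G] (g u : G) (m : ℤ) :
    (g⁻¹ * u * g) ^ m = g⁻¹ * u ^ m * g := by
  simpa using conj_zpow_left_aux g⁻¹ u m

private lemma conj_pow_right_aux {G : Type*} [Group G] (g u : G) (m : ℕ) :
    (g⁻¹ * u * g) ^ m = g⁻¹ * u ^ m * g := by
  simpa using conj_pow_left_aux g⁻¹ u m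

/-- Key abstract lemma: if a group `G` is generated by `a` and `b`, with
`a⁻¹ bⁿ a = b^(n+1)` and `a` in the normal closure of `b`, then `b = 1`. -/
private lemma aux_main {G : Type*} [Group G] (a b : G) (n : ℕ) (hn : 1 ≤ n)
    (htop : ∀ S : Subgroup G, a ∈ S → b ∈ S → ∀ g, g ∈ S)
    (hrel : a⁻¹ * b ^ n * a = b ^ (n + 1))
    (hwn : a ∈ Subgroup.normalClosure ({b} : Set G)) :
    b = 1 := by
  have hnz : (n : ℤ) ≠ 0 := by exact_mod_cast Nat.one_le_iff_ne_zero.mp hn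
  have hrelz : a⁻¹ * b ^ (n : ℤ) * a = b ^ ((n : ℤ) + 1) := by
    rw [show ((n : ℤ) + 1) = ((n + 1 : ℕ) : ℤ) by push_cast; ring, zpow_natCast, zpow_natCast]
    exact hrel
  -- the subgroup of elements commensurating ⟨b⟩
  set C : Subgroup G :=
    { carrier := {g : G | ∃ p q : ℤ, p ≠ 0 ∧ q ≠ 0 ∧ g⁻¹ * b ^ p * g = b ^ q}
      one_mem' := ⟨1, 1, one_ne_zero, one_ne_zero, by simp⟩
      mul_mem' := by
        rintro g h ⟨p₁, q₁, hp₁, hq₁, hg⟩ ⟨p₂, q₂, hp₂, hq₂, hh⟩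
        refine ⟨p₁ * p₂, q₂ * q₁, mul_ne_zero hp₁ hp₂, mul_ne_zero hq₂ hq₁, ?_⟩
        have e1 : g⁻¹ * b ^ (p₁ * p₂) * g = b ^ (q₁ * p₂) := by
          rw [zpow_mul, zpow_mul, ← conj_zpow_right_aux g (b ^ p₁) p₂, hg]
        have e2 : h⁻¹ * b ^ (q₁ * p₂) * h = b ^ (q₂ * q₁) := by
          rw [mul_comm q₁ p₂, zpow_mul, ← conj_zpow_right_aux h (b ^ p₂) q₁, hh,
            ← zpow_mul, mul_comm q₂ q₁]
        calc (g * h)⁻¹ * b ^ (p₁ * p₂) * (g * h)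
            = h⁻¹ * (g⁻¹ * b ^ (p₁ * p₂) * g) * h := by group
          _ = h⁻¹ * b ^ (q₁ * p₂) * h := by rw [e1]
          _ = b ^ (q₂ * q₁) := e2
      inv_mem' := by
        rintro g ⟨p, q, hp, hq, hg⟩
        refine ⟨q, p, hq, hp, ?_⟩
        rw [inv_inv, ← hg]
        group } with hC
  have hCtop : ∀ t : G, ∃ p q : ℤ, p ≠ 0 ∧ q ≠ 0 ∧ t⁻¹ * b ^ p * t = b ^ q := by
    intro t
    have haC : a ∈ C := ⟨(n : ℤ), (n : ℤ) + 1, hnz, by omega, hrelz⟩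
    have hbC : b ∈ C := ⟨1, 1, one_ne_zero, one_ne_zero, by group⟩
    exact htop C haC hbC t
  -- the normal subgroup of elements centralizing some nonzero power of b
  set K : Subgroup G :=
    { carrier := {g : G | ∃ p : ℤ, p ≠ 0 ∧ g⁻¹ * b ^ p * g = b ^ p}
      one_mem' := ⟨1, one_ne_zero, by simp⟩
      mul_mem' := by
        rintro g h ⟨p₁, hp₁, hg⟩ ⟨p₂, hp₂, hh⟩
        refine ⟨p₁ * p₂, mul_ne_zero hp₁ hp₂, ?_⟩
        have e1 : g⁻¹ * b ^ (p₁ * p₂) * g = b ^ (p₁ * p₂) := by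
          rw [zpow_mul, ← conj_zpow_right_aux g (b ^ p₁) p₂, hg]
        have e2 : h⁻¹ * b ^ (p₁ * p₂) * h = b ^ (p₁ * p₂) := by
          rw [mul_comm p₁ p₂, zpow_mul, ← conj_zpow_right_aux h (b ^ p₂) p₁, hh]
        calc (g * h)⁻¹ * b ^ (p₁ * p₂) * (g * h)
            = h⁻¹ * (g⁻¹ * b ^ (p₁ * p₂) * g) * h := by group
          _ = h⁻¹ * b ^ (p₁ * p₂) * h := by rw [e1]
          _ = b ^ (p₁ * p₂) := e2
      inv_mem' := by
        rintro g ⟨p, hp, hg⟩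
        refine ⟨p, hp, ?_⟩
        have hcomm : b ^ p * g = g * b ^ p := by
          calc b ^ p * g = g * (g⁻¹ * b ^ p * g) := by group
            _ = g * b ^ p := by rw [hg]
        rw [inv_inv]
        rw [← hcomm]
        group } with hK
  have hKnormal : K.Normal := by
    constructor
    rintro h ⟨p, hp, hfix⟩ t
    obtain ⟨pt, qt, hpt, hqt, ht⟩ := hCtop t
    refine ⟨pt * p, mul_ne_zero hpt hp, ?_⟩
    have e1 : t⁻¹ * b ^ (pt * p) * t = b ^ (qt * p) := by
      rw [zpow_mul, zpow_mul, ← conj_zpow_right_aux t (b ^ pt) p, ht]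
    have e1' : t * b ^ (qt * p) * t⁻¹ = b ^ (pt * p) := by
      rw [← e1]; group
    have e2 : h⁻¹ * b ^ (qt * p) * h = b ^ (qt * p) := by
      rw [mul_comm qt p, zpow_mul, ← conj_zpow_right_aux h (b ^ p) qt, hfix]
    calc (t * h * t⁻¹)⁻¹ * b ^ (pt * p) * (t * h * t⁻¹)
        = t * (h⁻¹ * (t⁻¹ * b ^ (pt * p) * t) * h) * t⁻¹ := by group
      _ = t * (h⁻¹ * b ^ (qt * p) * h) * t⁻¹ := by rw [e1]
      _ = t * b ^ (qt * p) * t⁻¹ := by rw [e2]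
      _ = b ^ (pt * p) := e1'
  haveI := hKnormal
  have hbK : b ∈ K := ⟨1, one_ne_zero, by group⟩
  have haK : a ∈ K :=
    Subgroup.normalClosure_le_normal (Set.singleton_subset_iff.mpr hbK) hwn
  obtain ⟨p, hp, hfix⟩ := haK
  -- derive b ^ p = 1
  have e1 : a⁻¹ * b ^ (p * (n : ℤ)) * a = b ^ (p * (n : ℤ)) := by
    rw [zpow_mul, ← conj_zpow_right_aux a (b ^ p) (n : ℤ), hfix]
  have e2 : a⁻¹ * b ^ ((n : ℤ) * p) * a = b ^ (((n : ℤ) + 1) * p) := by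
    rw [zpow_mul b (n : ℤ) p, zpow_mul b ((n : ℤ) + 1) p,
      ← conj_zpow_right_aux a (b ^ (n : ℤ)) p, hrelz]
  have key : b ^ (p * (n : ℤ)) = b ^ (((n : ℤ) + 1) * p) := by
    calc b ^ (p * (n : ℤ)) = a⁻¹ * b ^ (p * (n : ℤ)) * a := e1.symm
      _ = a⁻¹ * b ^ ((n : ℤ) * p) * a := by rw [mul_comm p (n : ℤ)]
      _ = b ^ (((n : ℤ) + 1) * p) := e2
  have hbp : b ^ p = 1 := by
    have key2 : b ^ (p * (n : ℤ)) = b ^ (p * (n : ℤ)) * b ^ p := by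
      rw [← zpow_add, key]
      congr 1
      ring
    exact (left_eq_mul.mp key2)
  -- b has finite order
  have hfin : IsOfFinOrder b := by
    rw [isOfFinOrder_iff_pow_eq_one]
    refine ⟨p.natAbs, Int.natAbs_pos.mpr hp, ?_⟩
    rcases Int.natAbs_eq p with h | h
    · rw [← zpow_natCast, ← h, hbp]
    · have := hbp
      rw [h, zpow_neg, inv_eq_one] at this
      rw [← zpow_natCast]
      exact this
  set o := orderOf b with ho'
  have hopos : 0 < o := hfin.orderOf_pos
  -- gcd facts
  have hords : orderOf (b ^ n) = orderOf (b ^ (n + 1)) := by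
    have h1 : b ^ (n + 1) = (MulAut.conj a⁻¹) (b ^ n) := by
      rw [← hrel]
      simp [MulAut.conj_apply]
    rw [h1, MulEquiv.orderOf_eq]
  have hgcd : Nat.gcd o n = Nat.gcd o (n + 1) := by
    have h1 : orderOf (b ^ n) = o / Nat.gcd o n :=
      orderOf_pow' b (Nat.one_le_iff_ne_zero.mp hn)
    have h2 : orderOf (b ^ (n + 1)) = o / Nat.gcd o (n + 1) :=
      orderOf_pow' b (Nat.succ_ne_zero n)
    have h3 : o / Nat.gcd o n = o / Nat.gcd o (n + 1) := by rw [← h1, ← h2, hords]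
    have d1 : Nat.gcd o n ∣ o := Nat.gcd_dvd_left o n
    have d2 : Nat.gcd o (n + 1) ∣ o := Nat.gcd_dvd_left o (n + 1)
    calc Nat.gcd o n = o / (o / Nat.gcd o n) := (Nat.div_div_self d1 hopos.ne').symm
      _ = o / (o / Nat.gcd o (n + 1)) := by rw [h3]
      _ = Nat.gcd o (n + 1) := Nat.div_div_self d2 hopos.ne'
  have hco1 : Nat.gcd o n = 1 := by
    have hdn : Nat.gcd o n ∣ n := Nat.gcd_dvd_right o n
    have hdn1 : Nat.gcd o n ∣ n + 1 := hgcd ▸ Nat.gcd_dvd_right o (n + 1)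
    have hone : Nat.gcd o n ∣ 1 := by
      have := Nat.dvd_sub hdn1 hdn
      simpa using this
    exact Nat.dvd_one.mp hone
  have hco2 : Nat.gcd o (n + 1) = 1 := hgcd ▸ hco1
  by_cases ho1 : o = 1
  · exact orderOf_eq_one_iff.mp ho1
  · have ho2 : 1 < o := by omega
    obtain ⟨k, -, hk⟩ :=
      Nat.exists_mul_mod_eq_one_of_coprime (Nat.coprime_comm.mp hco1) ho2
    obtain ⟨m, -, hm⟩ :=
      Nat.exists_mul_mod_eq_one_of_coprime (Nat.coprime_comm.mp hco2) ho2
    have hbnk : b ^ (n * k) = b := by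
      have h := pow_eq_pow_iff_modEq.mpr
        (show n * k ≡ 1 [MOD orderOf b] by
          show (n * k) % orderOf b = 1 % orderOf b
          rw [← ho', hk, Nat.mod_eq_of_lt ho2])
      simpa using (h : b ^ (n * k) = b ^ 1)
    have hbnm : b ^ ((n + 1) * m) = b := by
      have h := pow_eq_pow_iff_modEq.mpr
        (show (n + 1) * m ≡ 1 [MOD orderOf b] by
          show ((n + 1) * m) % orderOf b = 1 % orderOf b
          rw [← ho', hm, Nat.mod_eq_of_lt ho2])
      simpa using (h : b ^ ((n + 1) * m) = b ^ 1)
    have hcj1 : a⁻¹ * b * a = b ^ ((n + 1) * k) := by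
      calc a⁻¹ * b * a = a⁻¹ * b ^ (n * k) * a := by rw [hbnk]
        _ = (a⁻¹ * b ^ n * a) ^ k := by rw [pow_mul, conj_pow_right_aux]
        _ = (b ^ (n + 1)) ^ k := by rw [hrel]
        _ = b ^ ((n + 1) * k) := (pow_mul b (n + 1) k).symm
    have hrel' : a * b ^ (n + 1) * a⁻¹ = b ^ n := by
      rw [← hrel]; group
    have hcj2 : a * b * a⁻¹ = b ^ (n * m) := by
      calc a * b * a⁻¹ = a * b ^ ((n + 1) * m) * a⁻¹ := by rw [hbnm]
        _ = (a * b ^ (n + 1) * a⁻¹) ^ m := by rw [pow_mul, conj_pow_left_aux]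
        _ = (b ^ n) ^ m := by rw [hrel']
        _ = b ^ (n * m) := (pow_mul b n m).symm
    have hZ : (Subgroup.zpowers b).Normal := by
      rw [← Subgroup.normalizer_eq_top_iff, eq_top_iff]
      intro t _
      refine htop (Subgroup.normalizer ((Subgroup.zpowers b : Subgroup G) : Set G)) ?_ ?_ t
      · rw [Subgroup.mem_normalizer_iff]
        intro h
        constructor
        · rintro ⟨c, rfl⟩
          rw [show a * b ^ c * a⁻¹ = (a * b * a⁻¹) ^ c from (conj_zpow_left_aux a b c).symm,
            hcj2]
          exact Subgroup.zpow_mem _ (Subgroup.npow_mem_zpowers b (n * m)) c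
        · intro hmem
          obtain ⟨c, hc⟩ := hmem
          have hc' : b ^ c = a * h * a⁻¹ := hc
          have hh : h = a⁻¹ * b ^ c * a := by rw [hc']; group
          rw [hh, show a⁻¹ * b ^ c * a = (a⁻¹ * b * a) ^ c from (conj_zpow_right_aux a b c).symm,
            hcj1]
          exact Subgroup.zpow_mem _ (Subgroup.npow_mem_zpowers b ((n + 1) * k)) c
      · rw [Subgroup.mem_normalizer_iff]
        intro h
        constructor
        · rintro ⟨c, rfl⟩
          rw [show b * b ^ c * b⁻¹ = b ^ c from by group]
          exact ⟨c, rfl⟩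
        · intro hmem
          obtain ⟨c, hc⟩ := hmem
          have hc' : b ^ c = b * h * b⁻¹ := hc
          have hh : h = b⁻¹ * b ^ c * b := by rw [hc']; group
          rw [hh, show b⁻¹ * b ^ c * b = b ^ c from by group]
          exact ⟨c, rfl⟩
    haveI := hZ
    have haZ : a ∈ Subgroup.zpowers b :=
      Subgroup.normalClosure_le_normal
        (Set.singleton_subset_iff.mpr (Subgroup.mem_zpowers b)) hwn
    obtain ⟨j, hj⟩ := haZ
    have hcomm : (b ^ j)⁻¹ * b ^ n * b ^ j = b ^ n := by
      have c : Commute (b ^ n) (b ^ j) := ((Commute.refl b).pow_left n).zpow_right j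
      rw [mul_assoc, c.eq, ← mul_assoc, inv_mul_cancel, one_mul]
    have hfinal : b ^ n = b ^ (n + 1) := by
      rw [← hrel, ← hj, hcomm]
    have hfin2 : b ^ n * b = b ^ n * 1 := by
      rw [mul_one, ← pow_succ]
      exact hfinal.symm
    exact mul_left_cancel hfin2

theorem stmt_3
    (x y : FreeGroup (Fin 2)) (hx : x = FreeGroup.of 0) (hy : y = FreeGroup.of 1)
    (n : ℕ) (hn : 1 ≤ n) (w : FreeGroup (Fin 2))
    (hw : FreeGroup.lift
      (fun i : Fin 2 => if i = 0 then Multiplicative.ofAdd (1 : ℤ) else 1) w = 1) :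
    ∀ g : PresentedGroup ({x⁻¹ * y ^ n * x * (y ^ (n + 1))⁻¹, x * w⁻¹} :
      Set (FreeGroup (Fin 2))), g = 1 := by
  set R : Set (FreeGroup (Fin 2)) := {x⁻¹ * y ^ n * x * (y ^ (n + 1))⁻¹, x * w⁻¹} with hR
  intro g
  let f : FreeGroup (Fin 2) →* PresentedGroup R := PresentedGroup.mk R
  -- relation 1
  have hr1mem : x⁻¹ * y ^ n * x * (y ^ (n + 1))⁻¹ ∈ R := Set.mem_insert _ _
  have hr2mem : x * w⁻¹ ∈ R := Set.mem_insert_of_mem _ rfl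
  have hr1 : f (x⁻¹ * y ^ n * x * (y ^ (n + 1))⁻¹) = 1 :=
    (QuotientGroup.eq_one_iff _).mpr (Subgroup.subset_normalClosure hr1mem)
  have hr2 : f (x * w⁻¹) = 1 :=
    (QuotientGroup.eq_one_iff _).mpr (Subgroup.subset_normalClosure hr2mem)
  simp only [map_mul, map_inv, map_pow] at hr1 hr2
  rw [mul_inv_eq_one] at hr1 hr2
  -- w lies in the normal closure of y in the free group
  have hker : w ∈ Subgroup.normalClosure ({y} : Set (FreeGroup (Fin 2))) := by
    set N0 := Subgroup.normalClosure ({y} : Set (FreeGroup (Fin 2))) with hN0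
    have hyN : y ∈ N0 := Subgroup.subset_normalClosure rfl
    set π : FreeGroup (Fin 2) →* FreeGroup (Fin 2) ⧸ N0 := QuotientGroup.mk' N0 with hπ
    have hπy : π y = 1 := (QuotientGroup.eq_one_iff y).mpr hyN
    set θ : Multiplicative ℤ →* FreeGroup (Fin 2) ⧸ N0 := zpowersHom _ (π x) with hθ
    have hcomp : θ.comp (FreeGroup.lift
        (fun i : Fin 2 => if i = 0 then Multiplicative.ofAdd (1 : ℤ) else 1)) = π := by
      apply FreeGroup.ext_hom
      rintro ⟨iv, hi⟩
      interval_cases iv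
      · rw [MonoidHom.comp_apply, FreeGroup.lift_apply_of]
        show θ (Multiplicative.ofAdd (1 : ℤ)) = π (FreeGroup.of 0)
        rw [← hx, hθ, zpowersHom_apply]
        simp
      · rw [MonoidHom.comp_apply, FreeGroup.lift_apply_of]
        show θ 1 = π (FreeGroup.of 1)
        rw [← hy, map_one, hπy]
    have hπw : π w = 1 := by
      rw [← hcomp, MonoidHom.comp_apply, hw, map_one]
    exact (QuotientGroup.eq_one_iff w).mp hπw
  -- hence f w is in the normal closure of f y
  have hwn : f x ∈ Subgroup.normalClosure ({f y} : Set (PresentedGroup R)) := by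
    rw [hr2]
    haveI : (Subgroup.normalClosure ({f y} : Set (PresentedGroup R))).comap f |>.Normal :=
      Subgroup.Normal.comap Subgroup.normalClosure_normal f
    have hle : Subgroup.normalClosure ({y} : Set (FreeGroup (Fin 2))) ≤
        (Subgroup.normalClosure ({f y} : Set (PresentedGroup R))).comap f := by
      apply Subgroup.normalClosure_le_normal
      intro z hz
      rw [Set.mem_singleton_iff] at hz
      subst hz
      exact Subgroup.subset_normalClosure rfl
    exact hle hker
  -- generation
  have htop : ∀ S : Subgroup (PresentedGroup R), f x ∈ S → f y ∈ S → ∀ h, h ∈ S := by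
    intro S hxS hyS h
    refine PresentedGroup.generated_by R S ?_ h
    intro j
    fin_cases j
    · show f (FreeGroup.of 0) ∈ S
      rw [← hx]; exact hxS
    · show f (FreeGroup.of 1) ∈ S
      rw [← hy]; exact hyS
  -- apply the key lemma
  have hb1 : f y = 1 := aux_main (f x) (f y) n hn htop hr1 hwn
  have ha1 : f x = 1 := by
    have hle : Subgroup.normalClosure ({f y} : Set (PresentedGroup R)) ≤ ⊥ := by
      apply Subgroup.normalClosure_le_normal
      intro z hz
      rw [Set.mem_singleton_iff] at hz
      subst hz
      rw [hb1]
      exact Subgroup.one_mem ⊥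
    simpa using hle hwn
  exact Subgroup.mem_bot.mp (htop ⊥ (by rw [ha1]; exact Subgroup.one_mem ⊥)
    (by rw [hb1]; exact Subgroup.one_mem ⊥) g)
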